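/- Skolemization under conditioning (C-SKOLEM): for a finitely supported distribution μ on A and a predicate family Φ : B → A → M → Prop, (𝒞_μ v. ∃b, Φ(b, v)) is equivalent to ∃f : A → B, (𝒞_μ v. Φ(f(v), v)). -/
import Mathlib

/-- The conditioning modality:
`(𝒞_μ v. Ψ(v))(x) := ∃ κ, wsum(μ, κ) ≼ x ∧ ∀ v ∈ supp(μ), Ψ(v)(κ(v))`. -/
def Cond {M A : Type*} (le : M → M → Prop) (wsum : PMF A → (A → M) → M)
    (μ : PMF A) (Φ : A → M → Prop) (x : M) : Prop :=
  ∃ κ : A → M, le (wsum μ κ) x ∧ ∀ v ∈ μ.support, Φ v (κ v)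

/-- C-SKOLEM: skolemization under conditioning: for a finitely
supported distribution `μ` on `A`, a nonempty type `B` and a predicate family
`Φ : B → A → M → Prop`, `(𝒞_μ v. ∃ b, Φ(b, v))(x)` is equivalent to
`∃ f : A → B, (𝒞_μ v. Φ(f v, v))(x)`. -/
theorem stmt_18 {M A B : Type*} [Nonempty B]
    (le : M → M → Prop) (wsum : PMF A → (A → M) → M)
    (μ : PMF A) (hfin : μ.support.Finite)
    (Φ : B → A → M → Prop) (x : M) :
    Cond le wsum μ (fun v y => ∃ b : B, Φ b v y) x ↔
      ∃ f : A → B, Cond le wsum μ (fun v => Φ (f v) v) x := by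
  classical
  constructor
  · rintro ⟨κ, hle, h⟩
    choose f hf using fun v (hv : v ∈ μ.support) => h v hv
    refine ⟨fun v => if hv : v ∈ μ.support then f v hv else Classical.arbitrary B,
      κ, hle, fun v hv => ?_⟩
    simp only [dif_pos hv]
    exact hf v hv
  · rintro ⟨f, κ, hle, h⟩
    exact ⟨κ, hle, fun v hv => ⟨f v, h v hv⟩⟩
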